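/- Fix p, q, n ≥ 1 and write n = (pq+1)ℓ + k with ℓ ≥ 0 and 0 ≤ k ≤ pq. If (p-1)q < k ≤ pq then ⌊p(n+q+1)/(pq+1)⌋ = pℓ + ⌊(k-1)/q⌋ + 1, and if k ≤ (p-1)q then ⌊p(n+q+1)/(pq+1)⌋ = pℓ + ⌊k/q⌋ + 1. -/
import Mathlib


theorem stmt_12 (p q n ℓ k : ℕ) (hp : 1 ≤ p) (hq : 1 ≤ q) (hn : 1 ≤ n)
    (hdecomp : n = (p * q + 1) * ℓ + k) (hk : k ≤ p * q) :
    ((p - 1) * q < k → p * (n + q + 1) / (p * q + 1) = p * ℓ + (k - 1) / q + 1) ∧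
    (k ≤ (p - 1) * q → p * (n + q + 1) / (p * q + 1) = p * ℓ + k / q + 1) := by
  have hm : 0 < p * q + 1 := Nat.succ_pos _
  have key : p * (n + q + 1) / (p * q + 1) = p * ℓ + p * (k + q + 1) / (p * q + 1) := by
    have h : p * (n + q + 1) = p * (k + q + 1) + p * ℓ * (p * q + 1) := by
      subst hdecomp; ring
    rw [h, Nat.add_mul_div_right _ _ hm, Nat.add_comm]
  have hpq : (p - 1) * q + q = p * q := by
    have : p - 1 + 1 = p := Nat.succ_pred_eq_of_pos hp
    nlinarith [this]
  constructor
  · intro h1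
    have hk1 : (k - 1) / q = p - 1 := by
      apply Nat.div_eq_of_lt_le
      · omega
      · have hp1 : p - 1 + 1 = p := by omega
        rw [hp1]; omega
    have hsmall : p * (k + q + 1) / (p * q + 1) = p := by
      apply Nat.div_eq_of_lt_le
      · exact Nat.mul_le_mul_left p (by omega)
      · have hpk : p * k ≤ p * (p * q) := Nat.mul_le_mul_left p hk
        nlinarith [hpk]
    rw [key, hsmall, hk1]
    omega
  · intro h2
    have hdm := Nat.div_add_mod k q
    set j := k / q with hj
    set r := k % q with hrdef
    have hr : r < q := Nat.mod_lt _ (by omega)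
    have hjp : j + 1 ≤ p := by
      have : k / q ≤ (p - 1) * q / q := Nat.div_le_div_right h2
      rw [Nat.mul_div_cancel _ (by omega : 0 < q)] at this
      omega
    have hsmall : p * (k + q + 1) / (p * q + 1) = j + 1 := by
      apply Nat.div_eq_of_lt_le
      · have hle : j + 1 ≤ p * (r + 1) := le_trans hjp (Nat.le_mul_of_pos_right p (by omega))
        nlinarith [hdm, hle]
      · have hle : p * (r + 1) ≤ p * q := Nat.mul_le_mul_left p (by omega)
        nlinarith [hdm, hle, hjp]
    rw [key, hsmall]
    omega
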